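/- arXiv:2306.16973 — 2 statements merged into one kernel-verified Lean document; each statement's English description precedes it below -/
import Mathlib

section
/- Let n, m, M be positive integers and fix a noise model (Φ11, Φ12, Φ22) with Φ11 ∈ ℝ^{n×n} symmetric, Φ12 ∈ ℝ^{n×M}, and Φ22 ∈ ℝ^{M×M} symmetric negative definite. Let (X, X⁺, U) be a data triple with X, X⁺ ∈ ℝ^{n×M}, U ∈ ℝ^{m×M}. Then a pair (A, B) ∈ ℝ^{n×n} × ℝ^{n×m} belongs to the consistency set Σ of (X, X⁺, U) if and only if [Iₙ, A, B] · V · [Iₙ, A, B]ᵀ ⪰ 0 (positive semidefinite), where V = G Φ Gᵀ with G = [[Iₙ, X⁺], [0, −X], [0, −U]] ∈ ℝ^{(2n+m)×(n+M)} and Φ = [[Φ11, Φ12], [Φ12ᵀ, Φ22]]. -/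
open Matrix

/-- The noise set `𝒲`: matrices `W ∈ ℝ^{n×M}` with
`Φ11 + Φ12 Wᵀ + W Φ12ᵀ + W Φ22 Wᵀ ⪰ 0`. -/
def InNoiseSet {n M : ℕ} (Φ11 : Matrix (Fin n) (Fin n) ℝ)
    (Φ12 : Matrix (Fin n) (Fin M) ℝ) (Φ22 : Matrix (Fin M) (Fin M) ℝ)
    (W : Matrix (Fin n) (Fin M) ℝ) : Prop :=
  (Φ11 + Φ12 * Wᵀ + W * Φ12ᵀ + W * Φ22 * Wᵀ).PosSemidef

/-- Membership in the consistency set `Σ` of a data triple `(X, X⁺, U)`. -/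
def Consistent {n m M : ℕ} (Φ11 : Matrix (Fin n) (Fin n) ℝ)
    (Φ12 : Matrix (Fin n) (Fin M) ℝ) (Φ22 : Matrix (Fin M) (Fin M) ℝ)
    (X Xp : Matrix (Fin n) (Fin M) ℝ) (U : Matrix (Fin m) (Fin M) ℝ)
    (A : Matrix (Fin n) (Fin n) ℝ) (B : Matrix (Fin n) (Fin m) ℝ) : Prop :=
  ∃ W : Matrix (Fin n) (Fin M) ℝ,
    InNoiseSet Φ11 Φ12 Φ22 W ∧ Xp = A * X + B * U + W


lemma quad_eq {n m M : ℕ} (Φ11 : Matrix (Fin n) (Fin n) ℝ)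
    (Φ12 : Matrix (Fin n) (Fin M) ℝ) (Φ22 : Matrix (Fin M) (Fin M) ℝ)
    (X Xp : Matrix (Fin n) (Fin M) ℝ) (U : Matrix (Fin m) (Fin M) ℝ)
    (A : Matrix (Fin n) (Fin n) ℝ) (B : Matrix (Fin n) (Fin m) ℝ) :
    (fromCols 1 (fromCols A B) : Matrix (Fin n) (Fin n ⊕ (Fin n ⊕ Fin m)) ℝ) *
      ((fromBlocks 1 Xp 0 (-(fromRows X U)) : Matrix (Fin n ⊕ (Fin n ⊕ Fin m)) (Fin n ⊕ Fin M) ℝ) *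
        (fromBlocks Φ11 Φ12 Φ12ᵀ Φ22 : Matrix (Fin n ⊕ Fin M) (Fin n ⊕ Fin M) ℝ) * (fromBlocks 1 Xp 0 (-(fromRows X U)) : Matrix (Fin n ⊕ (Fin n ⊕ Fin m)) (Fin n ⊕ Fin M) ℝ)ᵀ) *
      (fromCols 1 (fromCols A B) : Matrix (Fin n) (Fin n ⊕ (Fin n ⊕ Fin m)) ℝ)ᵀ =
    Φ11 + Φ12 * (Xp - (A * X + B * U))ᵀ + (Xp - (A * X + B * U)) * Φ12ᵀ +
      (Xp - (A * X + B * U)) * Φ22 * (Xp - (A * X + B * U))ᵀ := by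
  set W := Xp - (A * X + B * U) with hW
  have hIG : (fromCols 1 (fromCols A B) : Matrix (Fin n) (Fin n ⊕ (Fin n ⊕ Fin m)) ℝ) *
      (fromBlocks 1 Xp 0 (-(fromRows X U)) : Matrix (Fin n ⊕ (Fin n ⊕ Fin m)) (Fin n ⊕ Fin M) ℝ) =
      fromCols 1 W := by
    rw [fromCols_mul_fromBlocks]
    simp [fromCols_mul_fromRows, hW, sub_eq_add_neg]
    congr 1
    abel
  calc (fromCols 1 (fromCols A B) : Matrix (Fin n) (Fin n ⊕ (Fin n ⊕ Fin m)) ℝ) *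
      ((fromBlocks 1 Xp 0 (-(fromRows X U)) : Matrix (Fin n ⊕ (Fin n ⊕ Fin m)) (Fin n ⊕ Fin M) ℝ) *
        (fromBlocks Φ11 Φ12 Φ12ᵀ Φ22 : Matrix (Fin n ⊕ Fin M) (Fin n ⊕ Fin M) ℝ) * (fromBlocks 1 Xp 0 (-(fromRows X U)) : Matrix (Fin n ⊕ (Fin n ⊕ Fin m)) (Fin n ⊕ Fin M) ℝ)ᵀ) *
      (fromCols 1 (fromCols A B) : Matrix (Fin n) (Fin n ⊕ (Fin n ⊕ Fin m)) ℝ)ᵀ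
      = (fromCols 1 W : Matrix (Fin n) (Fin n ⊕ Fin M) ℝ) * (fromBlocks Φ11 Φ12 Φ12ᵀ Φ22 : Matrix (Fin n ⊕ Fin M) (Fin n ⊕ Fin M) ℝ) * (fromCols 1 W : Matrix (Fin n) (Fin n ⊕ Fin M) ℝ)ᵀ := by
        rw [← hIG]; simp only [transpose_mul, Matrix.mul_assoc]
    _ = _ := by
        rw [fromCols_mul_fromBlocks, transpose_fromCols, fromCols_mul_fromRows]
        simp only [Matrix.mul_one, Matrix.one_mul, transpose_one, Matrix.add_mul]
        abel

theorem consistency_set_iff_quadratic_matrix_inequality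
    {n m M : ℕ} (hn : 0 < n) (hm : 0 < m) (hM : 0 < M)
    (Φ11 : Matrix (Fin n) (Fin n) ℝ) (Φ12 : Matrix (Fin n) (Fin M) ℝ)
    (Φ22 : Matrix (Fin M) (Fin M) ℝ)
    (hΦ11 : Φ11 = Φ11ᵀ) (hΦ22sym : Φ22 = Φ22ᵀ) (hΦ22 : (-Φ22).PosDef)
    (X Xp : Matrix (Fin n) (Fin M) ℝ) (U : Matrix (Fin m) (Fin M) ℝ)
    (A : Matrix (Fin n) (Fin n) ℝ) (B : Matrix (Fin n) (Fin m) ℝ) :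
    Consistent Φ11 Φ12 Φ22 X Xp U A B ↔
      (letI Φ : Matrix (Fin n ⊕ Fin M) (Fin n ⊕ Fin M) ℝ :=
        fromBlocks Φ11 Φ12 Φ12ᵀ Φ22
      letI G : Matrix (Fin n ⊕ (Fin n ⊕ Fin m)) (Fin n ⊕ Fin M) ℝ :=
        fromBlocks 1 Xp 0 (-(fromRows X U))
      letI V := G * Φ * Gᵀ
      letI IAB : Matrix (Fin n) (Fin n ⊕ (Fin n ⊕ Fin m)) ℝ :=
        fromCols 1 (fromCols A B)
      (IAB * V * IABᵀ).PosSemidef) := by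
  show Consistent Φ11 Φ12 Φ22 X Xp U A B ↔
      ((fromCols 1 (fromCols A B) : Matrix (Fin n) (Fin n ⊕ (Fin n ⊕ Fin m)) ℝ) *
        ((fromBlocks 1 Xp 0 (-(fromRows X U)) :
            Matrix (Fin n ⊕ (Fin n ⊕ Fin m)) (Fin n ⊕ Fin M) ℝ) *
          (fromBlocks Φ11 Φ12 Φ12ᵀ Φ22 : Matrix (Fin n ⊕ Fin M) (Fin n ⊕ Fin M) ℝ) * (fromBlocks 1 Xp 0 (-(fromRows X U)) : Matrix (Fin n ⊕ (Fin n ⊕ Fin m)) (Fin n ⊕ Fin M) ℝ)ᵀ) *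
        (fromCols 1 (fromCols A B) : Matrix (Fin n) (Fin n ⊕ (Fin n ⊕ Fin m)) ℝ)ᵀ).PosSemidef
  rw [quad_eq Φ11 Φ12 Φ22 X Xp U A B]
  constructor
  · rintro ⟨W, hWset, hXp⟩
    have hWeq : Xp - (A * X + B * U) = W := by rw [hXp]; abel
    rw [hWeq]; exact hWset
  · intro h
    exact ⟨Xp - (A * X + B * U), h, by abel⟩
end

section
/- Let n, m, M be positive integers, fix a noise model (Φ11, Φ12, Φ22) with Φ11 ∈ ℝ^{n×n} symmetric, Φ12 ∈ ℝ^{n×M}, Φ22 ∈ ℝ^{M×M} symmetric negative definite, and let (X, X⁺, U) be a data triple satisfying the generalized Slater condition. If there exist P ∈ ℝ^{n×n} with P = Pᵀ ≻ 0, L ∈ ℝ^{m×n}, and scalars a ≥ 0, b > 0 satisfying the stabilization LMI for (X, X⁺, U), then K := L P⁻¹ quadratically stabilizes, with Lyapunov matrix P, every system in the consistency set Σ of (X, X⁺, U); that is, P − (A + B K) P (A + B K)ᵀ ≻ 0 for all (A, B) ∈ Σ. -/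
open Matrix

/-- The generalized Slater condition for the data triple `(X, X⁺, U)`. -/
def Slater {n m M : ℕ} (Φ11 : Matrix (Fin n) (Fin n) ℝ)
    (Φ12 : Matrix (Fin n) (Fin M) ℝ) (Φ22 : Matrix (Fin M) (Fin M) ℝ)
    (X Xp : Matrix (Fin n) (Fin M) ℝ) (U : Matrix (Fin m) (Fin M) ℝ) : Prop :=
  ∃ Z : Matrix (Fin n ⊕ Fin m) (Fin n) ℝ,
    (letI Φ : Matrix (Fin n ⊕ Fin M) (Fin n ⊕ Fin M) ℝ :=
      fromBlocks Φ11 Φ12 Φ12ᵀ Φ22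
    letI G : Matrix (Fin n ⊕ (Fin n ⊕ Fin m)) (Fin n ⊕ Fin M) ℝ :=
      fromBlocks 1 Xp 0 (-(fromRows X U))
    letI IZ : Matrix (Fin n ⊕ (Fin n ⊕ Fin m)) (Fin n) ℝ := fromRows 1 Z
    (IZᵀ * (G * Φ * Gᵀ) * IZ).PosSemidef)

/-- The stabilization LMI for the data triple `(X, X⁺, U)` in variables `(P, L, a, b)`. -/
def StabLMI {n m M : ℕ} (Φ11 : Matrix (Fin n) (Fin n) ℝ)
    (Φ12 : Matrix (Fin n) (Fin M) ℝ) (Φ22 : Matrix (Fin M) (Fin M) ℝ)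
    (X Xp : Matrix (Fin n) (Fin M) ℝ) (U : Matrix (Fin m) (Fin M) ℝ)
    (P : Matrix (Fin n) (Fin n) ℝ) (L : Matrix (Fin m) (Fin n) ℝ)
    (a b : ℝ) : Prop :=
  letI Φ : Matrix (Fin n ⊕ Fin M) (Fin n ⊕ Fin M) ℝ :=
    fromBlocks Φ11 Φ12 Φ12ᵀ Φ22
  letI Ghat : Matrix (Fin n ⊕ (Fin n ⊕ (Fin m ⊕ Fin n))) (Fin n ⊕ Fin M) ℝ :=
    fromBlocks 1 Xp 0 (fromRows (-X) (fromRows (-U) 0))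
  letI Blk : Matrix (Fin n ⊕ (Fin n ⊕ (Fin m ⊕ Fin n)))
      (Fin n ⊕ (Fin n ⊕ (Fin m ⊕ Fin n))) ℝ :=
    fromBlocks (P - b • 1) 0 0
      (fromBlocks (-P) (fromCols (-Lᵀ) 0) (fromRows (-L) 0)
        (fromBlocks 0 L Lᵀ P))
  (Blk - a • (Ghat * Φ * Ghatᵀ)).PosSemidef

theorem lmi_solution_stabilizes_consistency_set
    {n m M : ℕ} (hn : 0 < n) (hm : 0 < m) (hM : 0 < M)
    (Φ11 : Matrix (Fin n) (Fin n) ℝ) (Φ12 : Matrix (Fin n) (Fin M) ℝ)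
    (Φ22 : Matrix (Fin M) (Fin M) ℝ)
    (hΦ11 : Φ11 = Φ11ᵀ) (hΦ22sym : Φ22 = Φ22ᵀ) (hΦ22 : (-Φ22).PosDef)
    (X Xp : Matrix (Fin n) (Fin M) ℝ) (U : Matrix (Fin m) (Fin M) ℝ)
    (hslater : Slater Φ11 Φ12 Φ22 X Xp U)
    (P : Matrix (Fin n) (Fin n) ℝ) (L : Matrix (Fin m) (Fin n) ℝ) (a b : ℝ)
    (hP : P = Pᵀ) (hPpd : P.PosDef) (ha : 0 ≤ a) (hb : 0 < b)
    (hLMI : StabLMI Φ11 Φ12 Φ22 X Xp U P L a b) :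
    ∀ (A : Matrix (Fin n) (Fin n) ℝ) (B : Matrix (Fin n) (Fin m) ℝ),
      Consistent Φ11 Φ12 Φ22 X Xp U A B →
      (P - (A + B * (L * P⁻¹)) * P * (A + B * (L * P⁻¹))ᵀ).PosDef := by
  intro A B hcons
  obtain ⟨W, hW, hXpW⟩ := hcons
  unfold StabLMI at hLMI
  have hdet : IsUnit P.det := (isUnit_iff_isUnit_det _).1 hPpd.isUnit
  have e1 : P * P⁻¹ = 1 := Matrix.mul_nonsing_inv _ hdet
  have e2 : P⁻¹ * P = 1 := Matrix.nonsing_inv_mul _ hdet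
  have hPinv : P⁻¹ᵀ = P⁻¹ := by rw [Matrix.transpose_nonsing_inv, ← hP]
  have c1 : ∀ x : Matrix (Fin n) (Fin n) ℝ, P * (P⁻¹ * x) = x := fun x => by
    rw [← Matrix.mul_assoc, e1, Matrix.one_mul]
  have c2 : ∀ x : Matrix (Fin n) (Fin n) ℝ, P⁻¹ * (P * x) = x := fun x => by
    rw [← Matrix.mul_assoc, e2, Matrix.one_mul]
  set Y : Matrix (Fin n) (Fin n) ℝ := -(P⁻¹ * Lᵀ * Bᵀ) with hYdef
  set v : Matrix (Fin n ⊕ (Fin n ⊕ (Fin m ⊕ Fin n))) (Fin n) ℝ :=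
    fromRows 1 (fromRows Aᵀ (fromRows Bᵀ Y)) with hvdef
  set Φ : Matrix (Fin n ⊕ Fin M) (Fin n ⊕ Fin M) ℝ := fromBlocks Φ11 Φ12 Φ12ᵀ Φ22 with hΦdef
  set Ghat : Matrix (Fin n ⊕ (Fin n ⊕ (Fin m ⊕ Fin n))) (Fin n ⊕ Fin M) ℝ :=
    fromBlocks 1 Xp 0 (fromRows (-X) (fromRows (-U) 0)) with hGdef
  set Blk : Matrix (Fin n ⊕ (Fin n ⊕ (Fin m ⊕ Fin n)))
      (Fin n ⊕ (Fin n ⊕ (Fin m ⊕ Fin n))) ℝ :=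
    fromBlocks (P - b • 1) 0 0
      (fromBlocks (-P) (fromCols (-Lᵀ) 0) (fromRows (-L) 0)
        (fromBlocks 0 L Lᵀ P)) with hBlkdef
  set Q : Matrix (Fin n) (Fin n) ℝ := (A + B * (L * P⁻¹)) * P * (A + B * (L * P⁻¹))ᵀ with hQdef
  set Ψ : Matrix (Fin n) (Fin n) ℝ := Φ11 + Φ12 * Wᵀ + W * Φ12ᵀ + W * Φ22 * Wᵀ with hΨdef
  -- conjugate the LMI by v
  have hconj : (vᵀ * (Blk - a • (Ghat * Φ * Ghatᵀ)) * v).PosSemidef := by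
    have := hLMI.conjTranspose_mul_mul_same v
    rwa [Matrix.conjTranspose_eq_transpose_of_trivial] at this
  -- compute vᵀ * Ghat
  have h1 : vᵀ * Ghat = fromCols 1 W := by
    simp only [hvdef, hGdef, transpose_fromRows, Matrix.transpose_one,
      fromCols_mul_fromBlocks, fromCols_mul_fromRows, Matrix.mul_zero, Matrix.mul_one,
      Matrix.one_mul, Matrix.mul_neg, Matrix.neg_mul, Matrix.transpose_transpose,
      add_zero, zero_add]
    rw [hXpW]
    have hred : A * X + B * U + W + (-(A * X) + -(B * U)) = W := by abel
    rw [hred]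
  -- the noise quadratic form
  have h2 : vᵀ * (Ghat * Φ * Ghatᵀ) * v = Ψ := by
    have : vᵀ * (Ghat * Φ * Ghatᵀ) * v = (vᵀ * Ghat) * Φ * (vᵀ * Ghat)ᵀ := by
      rw [Matrix.transpose_mul, Matrix.transpose_transpose]
      simp only [Matrix.mul_assoc]
    rw [this, h1, transpose_fromCols, Matrix.transpose_one, hΦdef,
      fromCols_mul_fromBlocks, fromCols_mul_fromRows, hΨdef]
    simp only [Matrix.one_mul, Matrix.mul_one, Matrix.add_mul]
    abel
  -- the Lyapunov quadratic form
  have h3 : vᵀ * Blk * v = P - b • 1 - Q := by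
    simp only [hvdef, hBlkdef, transpose_fromRows, Matrix.transpose_one,
      fromCols_mul_fromBlocks, fromCols_mul_fromRows, fromBlocks_mul_fromRows,
      mul_fromCols, fromRows_mul, Matrix.transpose_transpose,
      Matrix.mul_zero, Matrix.zero_mul, Matrix.mul_one, Matrix.one_mul, add_zero, zero_add]
    have hQ : Q = A * P * Aᵀ + A * Lᵀ * Bᵀ + B * L * Aᵀ + B * (L * (P⁻¹ * (Lᵀ * Bᵀ))) := by
      rw [hQdef, Matrix.transpose_add, Matrix.transpose_mul, Matrix.transpose_mul, hPinv]
      simp only [Matrix.mul_add, Matrix.add_mul, Matrix.mul_assoc, c1, c2]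
      abel
    rw [hQ, hYdef]
    simp only [Matrix.transpose_neg, Matrix.transpose_mul, Matrix.transpose_transpose,
      hPinv, Matrix.mul_neg, Matrix.neg_mul, Matrix.mul_zero, Matrix.zero_mul,
      Matrix.mul_one, Matrix.one_mul, add_zero, zero_add, e1, e2,
      fromCols_mul_fromBlocks, fromCols_mul_fromRows, fromBlocks_mul_fromRows,
      mul_fromCols, fromRows_mul,
      Matrix.mul_add, Matrix.add_mul, Matrix.mul_assoc, c1, c2]
    module
  -- combine
  have hkey : vᵀ * (Blk - a • (Ghat * Φ * Ghatᵀ)) * v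
      = (P - b • 1 - Q) - a • Ψ := by
    rw [Matrix.mul_sub, Matrix.sub_mul, Matrix.mul_smul, Matrix.smul_mul, h2, h3]
  rw [hkey] at hconj
  have hΨpsd : Ψ.PosSemidef := hW
  have haΨ : (a • Ψ).PosSemidef := by
    refine ⟨?_, fun x => ?_⟩
    · show (a • Ψ)ᴴ = a • Ψ
      rw [Matrix.conjTranspose_smul, star_trivial, hΨpsd.1.eq]
    · exact (hΨpsd.smul ha).2 x
  have hPSD : (P - b • 1 - Q).PosSemidef := by
    have := hconj.add haΨ
    simpa using this
  have hb1 : ((b : ℝ) • (1 : Matrix (Fin n) (Fin n) ℝ)).PosDef := by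
    refine ⟨?_, fun x hx => ?_⟩
    · simp [Matrix.IsHermitian, Matrix.conjTranspose_smul]
    · exact ((Matrix.PosDef.one (R := ℝ) (n := Fin n)).smul hb).2 hx
  have hsplit : P - Q = (P - b • 1 - Q) + b • 1 := by abel
  rw [hsplit]
  exact Matrix.PosDef.posSemidef_add hPSD hb1
end
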